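/- For every integer n > 7 coprime to 6, 2·s(1,1;n) - s(1,2;n) - s(1,3;n) - s(1,4;n) + s(1,6;n) - s(1, 2·3⁻¹; n) + s(1, 4·3⁻¹; n) > 0. -/

import Mathlib

/-- The sawtooth function `((x)) = x - ⌊x⌋ - 1/2` for non-integer `x`, and `0` for integer `x`. -/
def saw (x : ℚ) : ℚ := if x.den = 1 then 0 else x - ⌊x⌋ - 1/2

/-- The generalized Dedekind sum `s(a,b;n) = ∑_{i=1}^{n-1} ((ia/n))((ib/n))`. -/
def dS (a b : ℤ) (n : ℕ) : ℚ :=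
  ∑ i ∈ Finset.range n, saw (i * a / n) * saw (i * b / n)

lemma den_one_iff (x : ℚ) : x.den = 1 ↔ ∃ t : ℤ, x = t := by
  constructor
  · intro h; exact ⟨x.num, (Rat.den_eq_one_iff x).mp h |>.symm⟩
  · rintro ⟨t, rfl⟩; exact Rat.den_intCast t

lemma saw_add_int (x : ℚ) (t : ℤ) : saw (x + t) = saw x := by
  unfold saw
  have key : (x + t).den = 1 ↔ x.den = 1 := by
    rw [den_one_iff, den_one_iff]
    constructor
    · rintro ⟨s, hs⟩; exact ⟨s - t, by push_cast; linarith⟩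
    · rintro ⟨s, rfl⟩; exact ⟨s + t, by push_cast; ring⟩
  rcases eq_or_ne x.den 1 with h | h
  · simp [h, key.mpr h]
  · have h2 : ¬(x + t).den = 1 := fun hh => h (key.mp hh)
    simp only [h, h2, if_neg, if_false]
    rw [Int.floor_add_intCast]
    push_cast; ring

lemma saw_eq (z : ℤ) (n : ℕ) (j : ℤ) (h1 : j * n < z) (h2 : z < (j+1) * n) :
    saw ((z : ℚ) / n) = z / n - j - 1/2 := by
  have hn : 0 < n := by
    rcases Nat.eq_zero_or_pos n with h | h
    · subst h; simp at h1 h2; omega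
    · exact h
  have hnq : (0:ℚ) < n := by exact_mod_cast hn
  have hlt1 : (j : ℚ) < (z:ℚ)/n := by
    rw [lt_div_iff₀ hnq]; exact_mod_cast h1
  have hlt2 : (z:ℚ)/n < j + 1 := by
    rw [div_lt_iff₀ hnq]; exact_mod_cast h2
  have hden : ¬((z:ℚ)/n).den = 1 := by
    rw [den_one_iff]
    rintro ⟨t, ht⟩
    rw [ht] at hlt1 hlt2
    have : j < t := by exact_mod_cast hlt1
    have : t < j + 1 := by exact_mod_cast hlt2
    omega
  have hfl : ⌊(z:ℚ)/n⌋ = j := by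
    rw [Int.floor_eq_iff]; constructor <;> [exact hlt1.le; exact hlt2]
  unfold saw
  rw [if_neg hden, hfl]

lemma sum_id (N : ℕ) : ∑ i ∈ Finset.range N, (i:ℚ) = N*(N-1)/2 := by
  induction N with
  | zero => simp
  | succ k ih => rw [Finset.sum_range_succ, ih]; push_cast; ring

lemma sum_sq (N : ℕ) : ∑ i ∈ Finset.range N, (i:ℚ)^2 = N*(N-1)*(2*N-1)/6 := by
  induction N with
  | zero => simp
  | succ k ih => rw [Finset.sum_range_succ, ih]; push_cast; ring

noncomputable def T (n i : ℕ) : ℚ :=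
  2 * (saw ((i:ℚ)/n) * saw ((i:ℚ)/n)) - saw ((i:ℚ)/n) * saw ((2*i:ℚ)/n)
  - saw ((i:ℚ)/n) * saw ((3*i:ℚ)/n) - saw ((i:ℚ)/n) * saw ((4*i:ℚ)/n)
  + saw ((i:ℚ)/n) * saw ((6*i:ℚ)/n) - saw ((3*i:ℚ)/n) * saw ((2*i:ℚ)/n)
  + saw ((3*i:ℚ)/n) * saw ((4*i:ℚ)/n)

lemma T_zero (n : ℕ) : T n 0 = 0 := by
  have : saw ((0:ℚ)) = 0 := by simp [saw]
  simp [T, this]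

noncomputable def Qc (g2 g3 g4 g6 : ℤ) : ℚ :=
  -(1/2) + 4*(g2+1/2) - (g3+1/2) - 2*(g4+1/2) - (g6+1/2)

noncomputable def Rc (g2 g3 g4 g6 : ℤ) : ℚ :=
  2*(1/2)^2 - (1/2)*(g2+1/2) - (1/2)*(g3+1/2) - (1/2)*(g4+1/2) + (1/2)*(g6+1/2)
  - (g2+1/2)*(g3+1/2) + (g3+1/2)*(g4+1/2)

lemma Tval (n i : ℕ) (g2 g3 g4 g6 : ℤ)
    (h1a : 0 < (i:ℤ)) (h1b : (i:ℤ) < n)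
    (h2a : g2 * n < 2*(i:ℤ)) (h2b : 2*(i:ℤ) < (g2+1)*n)
    (h3a : g3 * n < 3*(i:ℤ)) (h3b : 3*(i:ℤ) < (g3+1)*n)
    (h4a : g4 * n < 4*(i:ℤ)) (h4b : 4*(i:ℤ) < (g4+1)*n)
    (h6a : g6 * n < 6*(i:ℤ)) (h6b : 6*(i:ℤ) < (g6+1)*n) :
    T n i = 5*(i:ℚ)^2/(n:ℚ)^2 + Qc g2 g3 g4 g6 * (i:ℚ)/n + Rc g2 g3 g4 g6 := by
  have hn : (0:ℚ) < n := by
    have : (0:ℤ) < n := lt_trans h1a h1b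
    exact_mod_cast this
  have e1 : saw ((i:ℚ)/n) = (i:ℚ)/n - 0 - 1/2 := by
    have := saw_eq (i:ℤ) n 0 (by simpa using h1a) (by simpa using h1b)
    simpa using this
  have e2 : saw ((2*i:ℚ)/n) = (2*i:ℚ)/n - g2 - 1/2 := by
    have := saw_eq (2*i:ℤ) n g2 (by exact_mod_cast h2a) (by exact_mod_cast h2b)
    push_cast at this ⊢; convert this using 2
  have e3 : saw ((3*i:ℚ)/n) = (3*i:ℚ)/n - g3 - 1/2 := by
    have := saw_eq (3*i:ℤ) n g3 (by exact_mod_cast h3a) (by exact_mod_cast h3b)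
    push_cast at this ⊢; convert this using 2
  have e4 : saw ((4*i:ℚ)/n) = (4*i:ℚ)/n - g4 - 1/2 := by
    have := saw_eq (4*i:ℤ) n g4 (by exact_mod_cast h4a) (by exact_mod_cast h4b)
    push_cast at this ⊢; convert this using 2
  have e6 : saw ((6*i:ℚ)/n) = (6*i:ℚ)/n - g6 - 1/2 := by
    have := saw_eq (6*i:ℤ) n g6 (by exact_mod_cast h6a) (by exact_mod_cast h6b)
    push_cast at this ⊢; convert this using 2
  unfold T Qc Rc
  rw [e1, e2, e3, e4, e6]
  field_simp
  ring

noncomputable def S1 (A B : ℕ) : ℚ := ((B:ℚ)*((B:ℚ)-1) - (A:ℚ)*((A:ℚ)-1))/2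
noncomputable def S2 (A B : ℕ) : ℚ :=
  ((B:ℚ)*((B:ℚ)-1)*(2*(B:ℚ)-1) - (A:ℚ)*((A:ℚ)-1)*(2*(A:ℚ)-1))/6

lemma sum_Ico_id (A B : ℕ) (h : A ≤ B) : ∑ i ∈ Finset.Ico A B, (i:ℚ) = S1 A B := by
  rw [Finset.sum_Ico_eq_sub _ h, sum_id, sum_id, S1]; ring

lemma sum_Ico_sq (A B : ℕ) (h : A ≤ B) : ∑ i ∈ Finset.Ico A B, (i:ℚ)^2 = S2 A B := by
  rw [Finset.sum_Ico_eq_sub _ h, sum_sq, sum_sq, S2]; ring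

lemma interval_eval (n A B : ℕ) (g2 g3 g4 g6 : ℤ) (hAB : A ≤ B)
    (hb : ∀ i:ℕ, A ≤ i → i < B →
      0 < (i:ℤ) ∧ (i:ℤ) < n ∧
      g2 * n < 2*(i:ℤ) ∧ 2*(i:ℤ) < (g2+1)*n ∧
      g3 * n < 3*(i:ℤ) ∧ 3*(i:ℤ) < (g3+1)*n ∧
      g4 * n < 4*(i:ℤ) ∧ 4*(i:ℤ) < (g4+1)*n ∧
      g6 * n < 6*(i:ℤ) ∧ 6*(i:ℤ) < (g6+1)*n) :
    ∑ i ∈ Finset.Ico A B, T n i =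
      5/(n:ℚ)^2 * S2 A B + Qc g2 g3 g4 g6 / n * S1 A B + Rc g2 g3 g4 g6 * ((B:ℚ) - (A:ℚ)) := by
  have step : ∑ i ∈ Finset.Ico A B, T n i =
      ∑ i ∈ Finset.Ico A B, (5*(i:ℚ)^2/(n:ℚ)^2 + Qc g2 g3 g4 g6 * (i:ℚ)/n + Rc g2 g3 g4 g6) := by
    apply Finset.sum_congr rfl
    intro i hi
    rw [Finset.mem_Ico] at hi
    obtain ⟨c1,c2,c3,c4,c5,c6,c7,c8,c9,c10⟩ := hb i hi.1 hi.2
    exact Tval n i g2 g3 g4 g6 c1 c2 c3 c4 c5 c6 c7 c8 c9 c10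
  rw [step]
  rw [Finset.sum_add_distrib, Finset.sum_add_distrib]
  have r1 : ∑ i ∈ Finset.Ico A B, 5*(i:ℚ)^2/(n:ℚ)^2 = 5/(n:ℚ)^2 * S2 A B := by
    rw [← sum_Ico_sq A B hAB, Finset.mul_sum]
    apply Finset.sum_congr rfl; intros; ring
  have r2 : ∑ i ∈ Finset.Ico A B, Qc g2 g3 g4 g6 * (i:ℚ)/n = Qc g2 g3 g4 g6 / n * S1 A B := by
    rw [← sum_Ico_id A B hAB, Finset.mul_sum]
    apply Finset.sum_congr rfl; intros; ring
  have r3 : ∑ _i ∈ Finset.Ico A B, Rc g2 g3 g4 g6 = Rc g2 g3 g4 g6 * ((B:ℚ) - (A:ℚ)) := by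
    rw [Finset.sum_const, Nat.card_Ico, nsmul_eq_mul, Nat.cast_sub hAB]
    ring
  rw [r1, r2, r3]

lemma sum_range_split (f : ℕ → ℚ) (n : ℕ) (hn : 1 ≤ n) :
    ∑ i ∈ Finset.range n, f i = f 0 + ∑ i ∈ Finset.Ico 1 n, f i := by
  rw [Finset.range_eq_Ico, ← Finset.sum_Ico_consecutive f (Nat.zero_le 1) hn]
  congr 1
  simp

lemma dS_reindex (n : ℕ) (hn : 1 < n) (hco : Nat.Coprime 3 n) (b b' : ℤ)
    (hd : (n:ℤ) ∣ 3*b - b') : dS 3 b' n = dS 1 b n := by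
  obtain ⟨v, -, hv⟩ := Nat.exists_mul_mod_eq_one_of_coprime hco hn
  obtain ⟨d, hdd⟩ := hd
  have hn0 : 0 < n := by omega
  have hnQ : (n:ℚ) ≠ 0 := by positivity
  unfold dS
  refine Finset.sum_nbij' (fun i => 3*i % n) (fun j => v*j % n) ?_ ?_ ?_ ?_ ?_
  · intro a _; exact Finset.mem_range.mpr (Nat.mod_lt _ hn0)
  · intro a _; exact Finset.mem_range.mpr (Nat.mod_lt _ hn0)
  · intro a ha
    simp only [Finset.mem_range] at ha
    calc v * (3*a % n) % n = v * (3*a) % n := Nat.mul_mod_mod _ _ _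
      _ = (3*v)*a % n := by ring_nf
      _ = (3*v % n)*a % n := (Nat.mod_mul_mod _ _ _).symm
      _ = a := by rw [hv, one_mul, Nat.mod_eq_of_lt ha]
  · intro a ha
    simp only [Finset.mem_range] at ha
    calc 3 * (v*a % n) % n = 3 * (v*a) % n := Nat.mul_mod_mod _ _ _
      _ = (3*v)*a % n := by ring_nf
      _ = (3*v % n)*a % n := (Nat.mod_mul_mod _ _ _).symm
      _ = a := by rw [hv, one_mul, Nat.mod_eq_of_lt ha]
  · intro a _
    set q : ℕ := 3*a/n with hq
    have hmod : (3*a % n) + n * q = 3*a := Nat.mod_add_div _ _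
    have hmodQ : ((3*a % n : ℕ) : ℚ) = 3*(a:ℚ) - n*q := by
      have := congrArg (fun x : ℕ => (x:ℚ)) hmod
      push_cast at this
      linarith
    have f1 : ((3*a % n : ℕ) : ℚ) * ((1:ℤ):ℚ) / n = (a:ℚ) * ((3:ℤ):ℚ) / n + ((-(q:ℤ) : ℤ):ℚ) := by
      rw [hmodQ]; push_cast; field_simp; ring
    have f2 : ((3*a % n : ℕ) : ℚ) * ((b:ℤ):ℚ) / n = (a:ℚ) * ((b':ℤ):ℚ) / n + (((a:ℤ)*d - (q:ℤ)*b : ℤ):ℚ) := by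
      rw [hmodQ]
      have hb3 : ((3:ℚ))*b = b' + (n:ℚ)*d := by
        have := congrArg (fun x : ℤ => (x:ℚ)) hdd
        push_cast at this
        linarith
      push_cast
      field_simp
      nlinarith [hb3]
    rw [f1, f2, saw_add_int, saw_add_int]

lemma comb (n : ℕ) :
    2 * dS 1 1 n - dS 1 2 n - dS 1 3 n - dS 1 4 n + dS 1 6 n - dS 3 2 n + dS 3 4 n
      = ∑ i ∈ Finset.range n, T n i := by
  unfold dS T
  rw [Finset.mul_sum, ← Finset.sum_sub_distrib, ← Finset.sum_sub_distrib,
      ← Finset.sum_sub_distrib, ← Finset.sum_add_distrib, ← Finset.sum_sub_distrib,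
      ← Finset.sum_add_distrib]
  apply Finset.sum_congr rfl
  intro i _
  have h1 : ((i:ℚ)) * ((1:ℤ):ℚ) / (n:ℚ) = (i:ℚ)/n := by push_cast; ring
  have h2 : ((i:ℚ)) * ((2:ℤ):ℚ) / (n:ℚ) = (2*(i:ℚ))/n := by push_cast; ring
  have h3 : ((i:ℚ)) * ((3:ℤ):ℚ) / (n:ℚ) = (3*(i:ℚ))/n := by push_cast; ring
  have h4 : ((i:ℚ)) * ((4:ℤ):ℚ) / (n:ℚ) = (4*(i:ℚ))/n := by push_cast; ring
  have h6 : ((i:ℚ)) * ((6:ℤ):ℚ) / (n:ℚ) = (6*(i:ℚ))/n := by push_cast; ring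
  rw [h1, h2, h3, h4, h6]
set_option maxHeartbeats 2000000 in
lemma case1 (m : ℕ) : ∑ i ∈ Finset.range (12*m+1), T (12*m+1) i = (m:ℚ) := by
  have e0 := interval_eval (12*m+1) 1 (1*m+1) 0 0 0 0 (by omega) (by intro i hA hB; omega)
  have e1 := interval_eval (12*m+1) (1*m+1) (2*m+1) 0 0 0 0 (by omega) (by intro i hA hB; omega)
  have e2 := interval_eval (12*m+1) (2*m+1) (3*m+1) 0 0 0 1 (by omega) (by intro i hA hB; omega)
  have e3 := interval_eval (12*m+1) (3*m+1) (4*m+1) 0 0 1 1 (by omega) (by intro i hA hB; omega)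
  have e4 := interval_eval (12*m+1) (4*m+1) (5*m+1) 0 1 1 2 (by omega) (by intro i hA hB; omega)
  have e5 := interval_eval (12*m+1) (5*m+1) (6*m+1) 0 1 1 2 (by omega) (by intro i hA hB; omega)
  have e6 := interval_eval (12*m+1) (6*m+1) (7*m+1) 1 1 2 3 (by omega) (by intro i hA hB; omega)
  have e7 := interval_eval (12*m+1) (7*m+1) (8*m+1) 1 1 2 3 (by omega) (by intro i hA hB; omega)
  have e8 := interval_eval (12*m+1) (8*m+1) (9*m+1) 1 2 2 4 (by omega) (by intro i hA hB; omega)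
  have e9 := interval_eval (12*m+1) (9*m+1) (10*m+1) 1 2 3 4 (by omega) (by intro i hA hB; omega)
  have e10 := interval_eval (12*m+1) (10*m+1) (11*m+1) 1 2 3 5 (by omega) (by intro i hA hB; omega)
  have e11 := interval_eval (12*m+1) (11*m+1) (12*m+1) 1 2 3 5 (by omega) (by intro i hA hB; omega)
  rw [sum_range_split (T (12*m+1)) (12*m+1) (by omega), T_zero]
  rw [← Finset.sum_Ico_consecutive (fun i => T (12*m+1) i) (show (1:ℕ) ≤ (1*m+1) by omega) (show (1*m+1) ≤ (12*m+1) by omega)]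
  rw [← Finset.sum_Ico_consecutive (fun i => T (12*m+1) i) (show ((1*m+1):ℕ) ≤ (2*m+1) by omega) (show (2*m+1) ≤ (12*m+1) by omega)]
  rw [← Finset.sum_Ico_consecutive (fun i => T (12*m+1) i) (show ((2*m+1):ℕ) ≤ (3*m+1) by omega) (show (3*m+1) ≤ (12*m+1) by omega)]
  rw [← Finset.sum_Ico_consecutive (fun i => T (12*m+1) i) (show ((3*m+1):ℕ) ≤ (4*m+1) by omega) (show (4*m+1) ≤ (12*m+1) by omega)]
  rw [← Finset.sum_Ico_consecutive (fun i => T (12*m+1) i) (show ((4*m+1):ℕ) ≤ (5*m+1) by omega) (show (5*m+1) ≤ (12*m+1) by omega)]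
  rw [← Finset.sum_Ico_consecutive (fun i => T (12*m+1) i) (show ((5*m+1):ℕ) ≤ (6*m+1) by omega) (show (6*m+1) ≤ (12*m+1) by omega)]
  rw [← Finset.sum_Ico_consecutive (fun i => T (12*m+1) i) (show ((6*m+1):ℕ) ≤ (7*m+1) by omega) (show (7*m+1) ≤ (12*m+1) by omega)]
  rw [← Finset.sum_Ico_consecutive (fun i => T (12*m+1) i) (show ((7*m+1):ℕ) ≤ (8*m+1) by omega) (show (8*m+1) ≤ (12*m+1) by omega)]
  rw [← Finset.sum_Ico_consecutive (fun i => T (12*m+1) i) (show ((8*m+1):ℕ) ≤ (9*m+1) by omega) (show (9*m+1) ≤ (12*m+1) by omega)]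
  rw [← Finset.sum_Ico_consecutive (fun i => T (12*m+1) i) (show ((9*m+1):ℕ) ≤ (10*m+1) by omega) (show (10*m+1) ≤ (12*m+1) by omega)]
  rw [← Finset.sum_Ico_consecutive (fun i => T (12*m+1) i) (show ((10*m+1):ℕ) ≤ (11*m+1) by omega) (show (11*m+1) ≤ (12*m+1) by omega)]
  rw [e0, e1, e2, e3, e4, e5, e6, e7, e8, e9, e10, e11]
  have hnq : (12*(m:ℚ)+1) ≠ 0 := by positivity
  simp only [S1, S2, Qc, Rc]
  push_cast
  field_simp
  ring

set_option maxHeartbeats 2000000 in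
lemma case5 (m : ℕ) : ∑ i ∈ Finset.range (12*m+5), T (12*m+5) i = (m:ℚ)+1 := by
  have e0 := interval_eval (12*m+5) 1 (1*m+1) 0 0 0 0 (by omega) (by intro i hA hB; omega)
  have e1 := interval_eval (12*m+5) (1*m+1) (2*m+1) 0 0 0 0 (by omega) (by intro i hA hB; omega)
  have e2 := interval_eval (12*m+5) (2*m+1) (3*m+2) 0 0 0 1 (by omega) (by intro i hA hB; omega)
  have e3 := interval_eval (12*m+5) (3*m+2) (4*m+2) 0 0 1 1 (by omega) (by intro i hA hB; omega)
  have e4 := interval_eval (12*m+5) (4*m+2) (5*m+3) 0 1 1 2 (by omega) (by intro i hA hB; omega)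
  have e5 := interval_eval (12*m+5) (5*m+3) (6*m+3) 0 1 1 2 (by omega) (by intro i hA hB; omega)
  have e6 := interval_eval (12*m+5) (6*m+3) (7*m+3) 1 1 2 3 (by omega) (by intro i hA hB; omega)
  have e7 := interval_eval (12*m+5) (7*m+3) (8*m+4) 1 1 2 3 (by omega) (by intro i hA hB; omega)
  have e8 := interval_eval (12*m+5) (8*m+4) (9*m+4) 1 2 2 4 (by omega) (by intro i hA hB; omega)
  have e9 := interval_eval (12*m+5) (9*m+4) (10*m+5) 1 2 3 4 (by omega) (by intro i hA hB; omega)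
  have e10 := interval_eval (12*m+5) (10*m+5) (11*m+5) 1 2 3 5 (by omega) (by intro i hA hB; omega)
  have e11 := interval_eval (12*m+5) (11*m+5) (12*m+5) 1 2 3 5 (by omega) (by intro i hA hB; omega)
  rw [sum_range_split (T (12*m+5)) (12*m+5) (by omega), T_zero]
  rw [← Finset.sum_Ico_consecutive (fun i => T (12*m+5) i) (show (1:ℕ) ≤ (1*m+1) by omega) (show (1*m+1) ≤ (12*m+5) by omega)]
  rw [← Finset.sum_Ico_consecutive (fun i => T (12*m+5) i) (show ((1*m+1):ℕ) ≤ (2*m+1) by omega) (show (2*m+1) ≤ (12*m+5) by omega)]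
  rw [← Finset.sum_Ico_consecutive (fun i => T (12*m+5) i) (show ((2*m+1):ℕ) ≤ (3*m+2) by omega) (show (3*m+2) ≤ (12*m+5) by omega)]
  rw [← Finset.sum_Ico_consecutive (fun i => T (12*m+5) i) (show ((3*m+2):ℕ) ≤ (4*m+2) by omega) (show (4*m+2) ≤ (12*m+5) by omega)]
  rw [← Finset.sum_Ico_consecutive (fun i => T (12*m+5) i) (show ((4*m+2):ℕ) ≤ (5*m+3) by omega) (show (5*m+3) ≤ (12*m+5) by omega)]
  rw [← Finset.sum_Ico_consecutive (fun i => T (12*m+5) i) (show ((5*m+3):ℕ) ≤ (6*m+3) by omega) (show (6*m+3) ≤ (12*m+5) by omega)]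
  rw [← Finset.sum_Ico_consecutive (fun i => T (12*m+5) i) (show ((6*m+3):ℕ) ≤ (7*m+3) by omega) (show (7*m+3) ≤ (12*m+5) by omega)]
  rw [← Finset.sum_Ico_consecutive (fun i => T (12*m+5) i) (show ((7*m+3):ℕ) ≤ (8*m+4) by omega) (show (8*m+4) ≤ (12*m+5) by omega)]
  rw [← Finset.sum_Ico_consecutive (fun i => T (12*m+5) i) (show ((8*m+4):ℕ) ≤ (9*m+4) by omega) (show (9*m+4) ≤ (12*m+5) by omega)]
  rw [← Finset.sum_Ico_consecutive (fun i => T (12*m+5) i) (show ((9*m+4):ℕ) ≤ (10*m+5) by omega) (show (10*m+5) ≤ (12*m+5) by omega)]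
  rw [← Finset.sum_Ico_consecutive (fun i => T (12*m+5) i) (show ((10*m+5):ℕ) ≤ (11*m+5) by omega) (show (11*m+5) ≤ (12*m+5) by omega)]
  rw [e0, e1, e2, e3, e4, e5, e6, e7, e8, e9, e10, e11]
  have hnq : (12*(m:ℚ)+5) ≠ 0 := by positivity
  simp only [S1, S2, Qc, Rc]
  push_cast
  field_simp
  ring

set_option maxHeartbeats 2000000 in
lemma case7 (m : ℕ) : ∑ i ∈ Finset.range (12*m+7), T (12*m+7) i = (m:ℚ) := by
  have e0 := interval_eval (12*m+7) 1 (1*m+1) 0 0 0 0 (by omega) (by intro i hA hB; omega)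
  have e1 := interval_eval (12*m+7) (1*m+1) (2*m+2) 0 0 0 0 (by omega) (by intro i hA hB; omega)
  have e2 := interval_eval (12*m+7) (2*m+2) (3*m+2) 0 0 0 1 (by omega) (by intro i hA hB; omega)
  have e3 := interval_eval (12*m+7) (3*m+2) (4*m+3) 0 0 1 1 (by omega) (by intro i hA hB; omega)
  have e4 := interval_eval (12*m+7) (4*m+3) (5*m+3) 0 1 1 2 (by omega) (by intro i hA hB; omega)
  have e5 := interval_eval (12*m+7) (5*m+3) (6*m+4) 0 1 1 2 (by omega) (by intro i hA hB; omega)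
  have e6 := interval_eval (12*m+7) (6*m+4) (7*m+5) 1 1 2 3 (by omega) (by intro i hA hB; omega)
  have e7 := interval_eval (12*m+7) (7*m+5) (8*m+5) 1 1 2 3 (by omega) (by intro i hA hB; omega)
  have e8 := interval_eval (12*m+7) (8*m+5) (9*m+6) 1 2 2 4 (by omega) (by intro i hA hB; omega)
  have e9 := interval_eval (12*m+7) (9*m+6) (10*m+6) 1 2 3 4 (by omega) (by intro i hA hB; omega)
  have e10 := interval_eval (12*m+7) (10*m+6) (11*m+7) 1 2 3 5 (by omega) (by intro i hA hB; omega)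
  have e11 := interval_eval (12*m+7) (11*m+7) (12*m+7) 1 2 3 5 (by omega) (by intro i hA hB; omega)
  rw [sum_range_split (T (12*m+7)) (12*m+7) (by omega), T_zero]
  rw [← Finset.sum_Ico_consecutive (fun i => T (12*m+7) i) (show (1:ℕ) ≤ (1*m+1) by omega) (show (1*m+1) ≤ (12*m+7) by omega)]
  rw [← Finset.sum_Ico_consecutive (fun i => T (12*m+7) i) (show ((1*m+1):ℕ) ≤ (2*m+2) by omega) (show (2*m+2) ≤ (12*m+7) by omega)]
  rw [← Finset.sum_Ico_consecutive (fun i => T (12*m+7) i) (show ((2*m+2):ℕ) ≤ (3*m+2) by omega) (show (3*m+2) ≤ (12*m+7) by omega)]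
  rw [← Finset.sum_Ico_consecutive (fun i => T (12*m+7) i) (show ((3*m+2):ℕ) ≤ (4*m+3) by omega) (show (4*m+3) ≤ (12*m+7) by omega)]
  rw [← Finset.sum_Ico_consecutive (fun i => T (12*m+7) i) (show ((4*m+3):ℕ) ≤ (5*m+3) by omega) (show (5*m+3) ≤ (12*m+7) by omega)]
  rw [← Finset.sum_Ico_consecutive (fun i => T (12*m+7) i) (show ((5*m+3):ℕ) ≤ (6*m+4) by omega) (show (6*m+4) ≤ (12*m+7) by omega)]
  rw [← Finset.sum_Ico_consecutive (fun i => T (12*m+7) i) (show ((6*m+4):ℕ) ≤ (7*m+5) by omega) (show (7*m+5) ≤ (12*m+7) by omega)]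
  rw [← Finset.sum_Ico_consecutive (fun i => T (12*m+7) i) (show ((7*m+5):ℕ) ≤ (8*m+5) by omega) (show (8*m+5) ≤ (12*m+7) by omega)]
  rw [← Finset.sum_Ico_consecutive (fun i => T (12*m+7) i) (show ((8*m+5):ℕ) ≤ (9*m+6) by omega) (show (9*m+6) ≤ (12*m+7) by omega)]
  rw [← Finset.sum_Ico_consecutive (fun i => T (12*m+7) i) (show ((9*m+6):ℕ) ≤ (10*m+6) by omega) (show (10*m+6) ≤ (12*m+7) by omega)]
  rw [← Finset.sum_Ico_consecutive (fun i => T (12*m+7) i) (show ((10*m+6):ℕ) ≤ (11*m+7) by omega) (show (11*m+7) ≤ (12*m+7) by omega)]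
  rw [e0, e1, e2, e3, e4, e5, e6, e7, e8, e9, e10, e11]
  have hnq : (12*(m:ℚ)+7) ≠ 0 := by positivity
  simp only [S1, S2, Qc, Rc]
  push_cast
  field_simp
  ring

set_option maxHeartbeats 2000000 in
lemma case11 (m : ℕ) : ∑ i ∈ Finset.range (12*m+11), T (12*m+11) i = (m:ℚ)+1 := by
  have e0 := interval_eval (12*m+11) 1 (1*m+1) 0 0 0 0 (by omega) (by intro i hA hB; omega)
  have e1 := interval_eval (12*m+11) (1*m+1) (2*m+2) 0 0 0 0 (by omega) (by intro i hA hB; omega)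
  have e2 := interval_eval (12*m+11) (2*m+2) (3*m+3) 0 0 0 1 (by omega) (by intro i hA hB; omega)
  have e3 := interval_eval (12*m+11) (3*m+3) (4*m+4) 0 0 1 1 (by omega) (by intro i hA hB; omega)
  have e4 := interval_eval (12*m+11) (4*m+4) (5*m+5) 0 1 1 2 (by omega) (by intro i hA hB; omega)
  have e5 := interval_eval (12*m+11) (5*m+5) (6*m+6) 0 1 1 2 (by omega) (by intro i hA hB; omega)
  have e6 := interval_eval (12*m+11) (6*m+6) (7*m+7) 1 1 2 3 (by omega) (by intro i hA hB; omega)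
  have e7 := interval_eval (12*m+11) (7*m+7) (8*m+8) 1 1 2 3 (by omega) (by intro i hA hB; omega)
  have e8 := interval_eval (12*m+11) (8*m+8) (9*m+9) 1 2 2 4 (by omega) (by intro i hA hB; omega)
  have e9 := interval_eval (12*m+11) (9*m+9) (10*m+10) 1 2 3 4 (by omega) (by intro i hA hB; omega)
  have e10 := interval_eval (12*m+11) (10*m+10) (11*m+11) 1 2 3 5 (by omega) (by intro i hA hB; omega)
  have e11 := interval_eval (12*m+11) (11*m+11) (12*m+11) 1 2 3 5 (by omega) (by intro i hA hB; omega)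
  rw [sum_range_split (T (12*m+11)) (12*m+11) (by omega), T_zero]
  rw [← Finset.sum_Ico_consecutive (fun i => T (12*m+11) i) (show (1:ℕ) ≤ (1*m+1) by omega) (show (1*m+1) ≤ (12*m+11) by omega)]
  rw [← Finset.sum_Ico_consecutive (fun i => T (12*m+11) i) (show ((1*m+1):ℕ) ≤ (2*m+2) by omega) (show (2*m+2) ≤ (12*m+11) by omega)]
  rw [← Finset.sum_Ico_consecutive (fun i => T (12*m+11) i) (show ((2*m+2):ℕ) ≤ (3*m+3) by omega) (show (3*m+3) ≤ (12*m+11) by omega)]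
  rw [← Finset.sum_Ico_consecutive (fun i => T (12*m+11) i) (show ((3*m+3):ℕ) ≤ (4*m+4) by omega) (show (4*m+4) ≤ (12*m+11) by omega)]
  rw [← Finset.sum_Ico_consecutive (fun i => T (12*m+11) i) (show ((4*m+4):ℕ) ≤ (5*m+5) by omega) (show (5*m+5) ≤ (12*m+11) by omega)]
  rw [← Finset.sum_Ico_consecutive (fun i => T (12*m+11) i) (show ((5*m+5):ℕ) ≤ (6*m+6) by omega) (show (6*m+6) ≤ (12*m+11) by omega)]
  rw [← Finset.sum_Ico_consecutive (fun i => T (12*m+11) i) (show ((6*m+6):ℕ) ≤ (7*m+7) by omega) (show (7*m+7) ≤ (12*m+11) by omega)]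
  rw [← Finset.sum_Ico_consecutive (fun i => T (12*m+11) i) (show ((7*m+7):ℕ) ≤ (8*m+8) by omega) (show (8*m+8) ≤ (12*m+11) by omega)]
  rw [← Finset.sum_Ico_consecutive (fun i => T (12*m+11) i) (show ((8*m+8):ℕ) ≤ (9*m+9) by omega) (show (9*m+9) ≤ (12*m+11) by omega)]
  rw [← Finset.sum_Ico_consecutive (fun i => T (12*m+11) i) (show ((9*m+9):ℕ) ≤ (10*m+10) by omega) (show (10*m+10) ≤ (12*m+11) by omega)]
  rw [← Finset.sum_Ico_consecutive (fun i => T (12*m+11) i) (show ((10*m+10):ℕ) ≤ (11*m+11) by omega) (show (11*m+11) ≤ (12*m+11) by omega)]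
  rw [e0, e1, e2, e3, e4, e5, e6, e7, e8, e9, e10, e11]
  have hnq : (12*(m:ℚ)+11) ≠ 0 := by positivity
  simp only [S1, S2, Qc, Rc]
  push_cast
  field_simp
  ring
theorem stmt_12 (n : ℕ) (hn : 7 < n) (hco : Nat.Coprime n 6)
    (c : ℤ) (hc : 3 * c ≡ 1 [ZMOD (n:ℤ)]) :
    0 < 2 * dS 1 1 n - dS 1 2 n - dS 1 3 n - dS 1 4 n + dS 1 6 n
        - dS 1 (2*c) n + dS 1 (4*c) n := by
  have hco3 : Nat.Coprime 3 n :=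
    (Nat.Coprime.coprime_dvd_right (by norm_num : (3:ℕ) ∣ 6) hco).symm
  have hco2 : Nat.Coprime 2 n :=
    (Nat.Coprime.coprime_dvd_right (by norm_num : (2:ℕ) ∣ 6) hco).symm
  have hd2 : ¬ (2:ℕ) ∣ n := by
    intro h; have := Nat.Coprime.eq_one_of_dvd hco2 h; omega
  have hd3 : ¬ (3:ℕ) ∣ n := by
    intro h; have := Nat.Coprime.eq_one_of_dvd hco3 h; omega
  obtain ⟨t, ht⟩ := Int.ModEq.dvd hc
  have hr2 : dS 1 (2*c) n = dS 3 2 n :=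
    (dS_reindex n (by omega) hco3 (2*c) 2 ⟨-2*t, by linarith⟩).symm
  have hr4 : dS 1 (4*c) n = dS 3 4 n :=
    (dS_reindex n (by omega) hco3 (4*c) 4 ⟨-4*t, by linarith⟩).symm
  rw [hr2, hr4, comb n]
  have h12 : n % 12 = 1 ∨ n % 12 = 5 ∨ n % 12 = 7 ∨ n % 12 = 11 := by omega
  rcases h12 with h | h | h | h
  · obtain ⟨m, rfl⟩ : ∃ m, n = 12*m+1 := ⟨n/12, by omega⟩
    rw [case1]
    have : 1 ≤ m := by omega
    have : (1:ℚ) ≤ (m:ℚ) := by exact_mod_cast this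
    linarith
  · obtain ⟨m, rfl⟩ : ∃ m, n = 12*m+5 := ⟨n/12, by omega⟩
    rw [case5]
    positivity
  · obtain ⟨m, rfl⟩ : ∃ m, n = 12*m+7 := ⟨n/12, by omega⟩
    rw [case7]
    have : 1 ≤ m := by omega
    have : (1:ℚ) ≤ (m:ℚ) := by exact_mod_cast this
    linarith
  · obtain ⟨m, rfl⟩ : ∃ m, n = 12*m+11 := ⟨n/12, by omega⟩
    rw [case11]
    positivity
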